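/- Let G = (V,E) be a finite graph with n(G) vertices that contains at least one cycle, and let C(G) = C(G,x,y,z) be its covered components polynomial. Then the girth g(G) of G (the minimum cardinality of an edge subset inducing a cycle) equals the minimum j such that the coefficient of x^{n(G)−j+1} y^{j} z^{1} in C(G) is positive, and the number #g(G) of edge subsets inducing a cycle of length g(G) equals the coefficient of x^{n(G)−g(G)+1} y^{g(G)} z^{1} in C(G). -/

import Mathlib

open MvPolynomial Finset
open scoped Classical

noncomputable section

variable {V : Type}

/-- The (finite) edge set of a simple graph on a finite vertex type, as a `Finset`. -/
def edgeFinset' [Fintype V] (G : SimpleGraph V) : Finset (Sym2 V) :=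
  (Set.toFinite G.edgeSet).toFinset

/-- `k(G)`: the number of connected components of `G`. -/
def kG (G : SimpleGraph V) : ℕ := Nat.card G.ConnectedComponent

/-- `c(G)`: the number of covered components of `G`, i.e. connected components
containing at least one edge. -/
def cG (G : SimpleGraph V) : ℕ :=
  Nat.card {c : G.ConnectedComponent // ∃ v w, G.Adj v w ∧ G.connectedComponentMk v = c}

/-- The covered components polynomial
`C(G,x,y,z) = ∑_{A ⊆ E} x^{k(⟨A⟩)} y^{|A|} z^{c(⟨A⟩)}` of a finite simple graph, where
`⟨A⟩` denotes the spanning subgraph with edge set `A`, and `x = X 0`, `y = X 1`,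
`z = X 2`. -/
def ccp [Fintype V] (G : SimpleGraph V) : MvPolynomial (Fin 3) ℤ :=
  ∑ A ∈ (edgeFinset' G).powerset,
    X 0 ^ kG (SimpleGraph.fromEdgeSet (A : Set (Sym2 V))) * X 1 ^ A.card *
      X 2 ^ cG (SimpleGraph.fromEdgeSet (A : Set (Sym2 V)))

/-- `[x^i y^j z^k] P`: the coefficient of the monomial `x^i y^j z^k`. -/
def coeff3 (P : MvPolynomial (Fin 3) ℤ) (i j k : ℕ) : ℤ :=
  MvPolynomial.coeff (Finsupp.single 0 i + Finsupp.single 1 j + Finsupp.single 2 k) P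

/-- The edge subset `A` induces a cycle: `A` is the edge set of some cycle of `G`. -/
def inducesCycle (G : SimpleGraph V) (A : Finset (Sym2 V)) : Prop :=
  ∃ (v : V) (w : G.Walk v v), w.IsCycle ∧ w.edges.toFinset = A

/-- `g(G)`: the girth of `G`, the minimum cardinality of an edge subset inducing a
cycle. -/
def girth' (G : SimpleGraph V) : ℕ :=
  sInf {j | ∃ A : Finset (Sym2 V), inducesCycle G A ∧ A.card = j}

/-- `#g(G)`: the number of edge subsets inducing a cycle of length `g(G)`. -/
def numGirthCycles [Fintype V] (G : SimpleGraph V) : ℕ :=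
  ((edgeFinset' G).powerset.filter (fun A => inducesCycle G A ∧ A.card = girth' G)).card

namespace CCPAux

open SimpleGraph
lemma walk_decomp {H H' : SimpleGraph V} {a b : V}
    (hAdj : ∀ u v, H.Adj u v ↔ H'.Adj u v ∨ s(u, v) = s(a, b)) :
    ∀ {u v : V}, H.Walk u v →
      H'.Reachable u v ∨ (H'.Reachable u a ∧ H'.Reachable b v) ∨
        (H'.Reachable u b ∧ H'.Reachable a v) := by
  intro u v w
  induction w with
  | nil => exact Or.inl (Reachable.refl _)
  | @cons u x v h p ih =>
    rcases (hAdj _ _).1 h with h' | h'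
    · rcases ih with hr | ⟨h1, h2⟩ | ⟨h1, h2⟩
      · exact Or.inl (h'.reachable.trans hr)
      · exact Or.inr (Or.inl ⟨h'.reachable.trans h1, h2⟩)
      · exact Or.inr (Or.inr ⟨h'.reachable.trans h1, h2⟩)
    · rw [Sym2.eq_iff] at h'
      rcases h' with ⟨rfl, rfl⟩ | ⟨rfl, rfl⟩
      · rcases ih with hr | ⟨h1, h2⟩ | ⟨h1, h2⟩
        · exact Or.inr (Or.inl ⟨Reachable.refl _, hr⟩)
        · exact Or.inr (Or.inl ⟨Reachable.refl _, h2⟩)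
        · exact Or.inl h2
      · rcases ih with hr | ⟨h1, h2⟩ | ⟨h1, h2⟩
        · exact Or.inr (Or.inr ⟨Reachable.refl _, hr⟩)
        · exact Or.inl h2
        · exact Or.inr (Or.inr ⟨Reachable.refl _, h2⟩)

/-- The induced map on connected components. -/
def ccmap {H H' : SimpleGraph V} (hle : H' ≤ H) :
    H'.ConnectedComponent → H.ConnectedComponent :=
  ConnectedComponent.lift (fun v => H.connectedComponentMk v)
    (fun _ _ p _ => ConnectedComponent.sound (p.mapLe hle).reachable)

lemma ccmap_mk {H H' : SimpleGraph V} (hle : H' ≤ H) (v : V) :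
    ccmap hle (H'.connectedComponentMk v) = H.connectedComponentMk v := rfl

lemma ccmap_surj {H H' : SimpleGraph V} (hle : H' ≤ H) :
    Function.Surjective (ccmap hle) := by
  intro d
  induction d using ConnectedComponent.ind with
  | _ v => exact ⟨H'.connectedComponentMk v, rfl⟩

lemma ccmap_key {H H' : SimpleGraph V} {a b : V} (hle : H' ≤ H)
    (hAdj : ∀ u v, H.Adj u v ↔ H'.Adj u v ∨ s(u, v) = s(a, b))
    {c c' : H'.ConnectedComponent} (h : ccmap hle c = ccmap hle c') :
    c = c' ∨ (c = H'.connectedComponentMk a ∧ c' = H'.connectedComponentMk b) ∨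
      (c = H'.connectedComponentMk b ∧ c' = H'.connectedComponentMk a) := by
  induction c using ConnectedComponent.ind with
  | _ u =>
  induction c' using ConnectedComponent.ind with
  | _ u' =>
  rw [ccmap_mk, ccmap_mk, ConnectedComponent.eq] at h
  obtain ⟨w⟩ := h
  rcases walk_decomp hAdj w with hr | ⟨h1, h2⟩ | ⟨h1, h2⟩
  · exact Or.inl (ConnectedComponent.sound hr)
  · exact Or.inr (Or.inl ⟨ConnectedComponent.sound h1, (ConnectedComponent.sound h2).symm⟩)
  · exact Or.inr (Or.inr ⟨ConnectedComponent.sound h1, (ConnectedComponent.sound h2).symm⟩)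

lemma card_cc_merge [Fintype V] {H H' : SimpleGraph V} {a b : V}
    (hle : H' ≤ H)
    (hAdj : ∀ u v, H.Adj u v ↔ H'.Adj u v ∨ s(u, v) = s(a, b))
    (hnr : ¬ H'.Reachable a b) :
    Nat.card H'.ConnectedComponent = Nat.card H.ConnectedComponent + 1 := by
  classical
  have hab : a ≠ b := fun h => hnr (h ▸ Reachable.refl _)
  haveI : Fintype H.ConnectedComponent := Fintype.ofFinite _
  haveI : Fintype H'.ConnectedComponent := Fintype.ofFinite _
  rw [Nat.card_eq_fintype_card, Nat.card_eq_fintype_card]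
  have hHab : H.Adj a b := (hAdj a b).2 (Or.inr rfl)
  have hne : H'.connectedComponentMk a ≠ H'.connectedComponentMk b := by
    rw [Ne, ConnectedComponent.eq]; exact hnr
  have hcount : Fintype.card H'.ConnectedComponent =
      ∑ d : H.ConnectedComponent,
        (Finset.univ.filter (fun c => ccmap hle c = d)).card := by
    rw [← Finset.card_univ]
    exact Finset.card_eq_sum_card_fiberwise (fun x _ => Finset.mem_univ _)
  have hfiber : ∀ d : H.ConnectedComponent,
      (Finset.univ.filter (fun c => ccmap hle c = d)).card =
        if d = H.connectedComponentMk a then 2 else 1 := by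
    intro d
    split_ifs with hd
    · subst hd
      have : (Finset.univ.filter (fun c => ccmap hle c = H.connectedComponentMk a)) =
          {H'.connectedComponentMk a, H'.connectedComponentMk b} := by
        ext c
        simp only [Finset.mem_filter, Finset.mem_univ, true_and, Finset.mem_insert,
          Finset.mem_singleton]
        constructor
        · intro hc
          have hca : ccmap hle (H'.connectedComponentMk a) = H.connectedComponentMk a := rfl
          rcases ccmap_key hle hAdj (hc.trans hca.symm) with h | ⟨h1, _⟩ | ⟨h1, _⟩
          · exact Or.inl h
          · exact Or.inl h1
          · exact Or.inr h1
        · rintro (rfl | rfl)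
          · rfl
          · rw [ccmap_mk]
            exact (ConnectedComponent.sound hHab.reachable).symm
      rw [this, Finset.card_insert_of_notMem (by simpa using hne), Finset.card_singleton]
    · obtain ⟨c₀, hc₀⟩ := ccmap_surj hle d
      have : (Finset.univ.filter (fun c => ccmap hle c = d)) = {c₀} := by
        ext c
        simp only [Finset.mem_filter, Finset.mem_univ, true_and, Finset.mem_singleton]
        constructor
        · intro hc
          rcases ccmap_key hle hAdj (hc.trans hc₀.symm) with h | ⟨h1, h2⟩ | ⟨h1, h2⟩
          · exact h
          · exfalso; apply hd
            rw [← hc, h1, ccmap_mk]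
          · exfalso; apply hd
            rw [← hc, h1, ccmap_mk]
            exact (ConnectedComponent.sound hHab.reachable).symm
        · rintro rfl; exact hc₀
      rw [this, Finset.card_singleton]
  rw [hcount]
  have : ∀ d : H.ConnectedComponent,
      (Finset.univ.filter (fun c => ccmap hle c = d)).card =
        1 + (if d = H.connectedComponentMk a then 1 else 0) := by
    intro d; rw [hfiber d]; split_ifs <;> rfl
  rw [Finset.sum_congr rfl (fun d _ => this d), Finset.sum_add_distrib,
    Finset.sum_ite_eq' Finset.univ (H.connectedComponentMk a) (fun _ => 1)]
  simp [Finset.card_univ]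

lemma card_cc_same [Fintype V] {H H' : SimpleGraph V} {a b : V}
    (hle : H' ≤ H)
    (hAdj : ∀ u v, H.Adj u v ↔ H'.Adj u v ∨ s(u, v) = s(a, b))
    (hr : H'.Reachable a b) :
    Nat.card H'.ConnectedComponent = Nat.card H.ConnectedComponent := by
  apply Nat.card_eq_of_bijective (ccmap hle)
  constructor
  · intro c c' h
    rcases ccmap_key hle hAdj h with h | ⟨h1, h2⟩ | ⟨h1, h2⟩
    · exact h
    · rw [h1, h2]; exact ConnectedComponent.sound hr
    · rw [h1, h2]; exact (ConnectedComponent.sound hr).symm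
  · exact ccmap_surj hle

lemma card_cc_bot [Fintype V] :
    Nat.card (⊥ : SimpleGraph V).ConnectedComponent = Fintype.card V := by
  rw [← Nat.card_eq_fintype_card]
  symm
  apply Nat.card_eq_of_bijective (fun v => (⊥ : SimpleGraph V).connectedComponentMk v)
  constructor
  · intro v w h
    exact (reachable_bot).1 (ConnectedComponent.exact h)
  · intro c
    induction c using ConnectedComponent.ind with
    | _ v => exact ⟨v, rfl⟩

open SimpleGraph

variable {V : Type}

-- generic adjacency characterization for insert
lemma adj_insert_iff {S : Finset (Sym2 V)} {a b : V} (hab : a ≠ b) :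
    ∀ u v, (fromEdgeSet (↑(insert s(a, b) S) : Set (Sym2 V))).Adj u v ↔
      (fromEdgeSet (↑S : Set (Sym2 V))).Adj u v ∨ s(u, v) = s(a, b) := by
  intro u v
  simp only [fromEdgeSet_adj, Finset.coe_insert, Set.mem_insert_iff, Finset.mem_coe]
  constructor
  · rintro ⟨h | h, hne⟩
    · exact Or.inr h
    · exact Or.inl ⟨h, hne⟩
  · rintro (⟨h, hne⟩ | h)
    · exact ⟨Or.inr h, hne⟩
    · refine ⟨Or.inl h, ?_⟩
      rw [Sym2.eq_iff] at h
      rcases h with ⟨rfl, rfl⟩ | ⟨rfl, rfl⟩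
      · exact hab
      · exact hab.symm

lemma adj_erase_iff {A : Finset (Sym2 V)} {a b : V} (hab : a ≠ b)
    (he : s(a, b) ∈ A) :
    ∀ u v, (fromEdgeSet (↑A : Set (Sym2 V))).Adj u v ↔
      (fromEdgeSet (↑(A.erase s(a, b)) : Set (Sym2 V))).Adj u v ∨ s(u, v) = s(a, b) := by
  intro u v
  simp only [fromEdgeSet_adj, Finset.coe_erase, Set.mem_diff, Finset.mem_coe,
    Set.mem_singleton_iff]
  constructor
  · rintro ⟨h, hne⟩
    by_cases h' : s(u, v) = s(a, b)
    · exact Or.inr h'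
    · exact Or.inl ⟨⟨h, h'⟩, hne⟩
  · rintro (⟨⟨h, _⟩, hne⟩ | h)
    · exact ⟨h, hne⟩
    · refine ⟨h ▸ he, ?_⟩
      rw [Sym2.eq_iff] at h
      rcases h with ⟨rfl, rfl⟩ | ⟨rfl, rfl⟩
      · exact hab
      · exact hab.symm

lemma acyclic_card [Fintype V] (A : Finset (Sym2 V)) (hd : ∀ e ∈ A, ¬ e.IsDiag)
    (hac : (fromEdgeSet (↑A : Set (Sym2 V))).IsAcyclic) :
    Nat.card (fromEdgeSet (↑A : Set (Sym2 V))).ConnectedComponent + A.card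
      = Fintype.card V := by
  classical
  induction A using Finset.strongInduction with
  | _ A ih =>
  rcases A.eq_empty_or_nonempty with rfl | ⟨e, he⟩
  · simp only [Finset.coe_empty, fromEdgeSet_empty, Finset.card_empty, add_zero]
    exact CCPAux.card_cc_bot
  · induction e using Sym2.ind with
    | _ a b =>
    have hab : a ≠ b := fun h => hd _ he (by rw [h]; exact Sym2.mk_isDiag_iff.2 rfl)
    set H := fromEdgeSet (↑A : Set (Sym2 V)) with hH
    set H' := fromEdgeSet (↑(A.erase s(a, b)) : Set (Sym2 V)) with hH'
    have hle : H' ≤ H := fromEdgeSet_mono (by exact_mod_cast Finset.erase_subset _ _)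
    have hAdj := adj_erase_iff hab he
    have hac' : H'.IsAcyclic := fun v c hc => hac _ ((Walk.mapLe_isCycle hle).2 hc)
    have hHab : H.Adj a b := (hAdj a b).2 (Or.inr rfl)
    -- a and b are not reachable in H'
    have hnr : ¬ H'.Reachable a b := by
      intro hr
      have hbr := (isAcyclic_iff_forall_adj_isBridge.1 hac) hHab
      rw [isBridge_iff] at hbr
      apply hbr
      refine hr.mono ?_
      intro u v huv
      rw [deleteEdges_adj]
      refine ⟨(hAdj u v).2 (Or.inl huv), ?_⟩
      rw [Set.mem_singleton_iff]
      intro h1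
      rw [hH', fromEdgeSet_adj] at huv
      have := huv.1
      rw [Finset.coe_erase] at this
      exact this.2 h1
    have hmerge := CCPAux.card_cc_merge hle hAdj hnr
    have hsub : A.erase s(a, b) ⊂ A := Finset.erase_ssubset he
    have hrec := ih _ hsub (fun e' he' => hd _ (Finset.mem_of_mem_erase he')) hac'
    rw [hmerge] at hrec
    have hcard : (A.erase s(a, b)).card + 1 = A.card := Finset.card_erase_add_one he
    omega

lemma pendant_acyclic {H H' : SimpleGraph V} {x y : V} (hxy : x ≠ y)
    (hiso : ∀ u, ¬ H'.Adj x u) (hac : H'.IsAcyclic)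
    (hAdj : ∀ u v, H.Adj u v ↔ H'.Adj u v ∨ s(u, v) = s(x, y)) : H.IsAcyclic := by
  intro v c hc
  by_cases hmem : s(x, y) ∈ c.edges
  · have hHxy : H.Adj x y := (hAdj x y).2 (Or.inr rfl)
    have := (adj_and_reachable_delete_edges_iff_exists_cycle.2 ⟨v, c, hc, hmem⟩).2
    have hr : H'.Reachable x y := by
      refine this.mono ?_
      intro u w huw
      rw [deleteEdges_adj] at huw
      rcases (hAdj u w).1 huw.1 with h | h
      · exact h
      · exact absurd h huw.2
    obtain ⟨p⟩ := hr
    cases p with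
    | nil => exact hxy rfl
    | cons h _ => exact hiso _ h
  · have hsub : ∀ e ∈ c.edges, e ∈ H'.edgeSet := by
      intro e hee
      induction e using Sym2.ind with
      | _ u w =>
      have hadj : H.Adj u w := c.adj_of_mem_edges hee
      rcases (hAdj u w).1 hadj with h | h
      · exact h
      · exact absurd (h ▸ hee) hmem
    exact hac _ (hc.transfer hsub)

lemma path_acyclic {G : SimpleGraph V} :
    ∀ {x y : V} (p : G.Walk x y), p.IsPath →
      (fromEdgeSet (↑p.edges.toFinset : Set (Sym2 V))).IsAcyclic := by
  intro x y p
  induction p with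
  | nil =>
    intro _
    simp only [Walk.edges_nil, List.toFinset_nil, Finset.coe_empty, fromEdgeSet_empty]
    intro v c hc
    cases c with
    | nil => exact hc.ne_nil rfl
    | cons h _ => exact h.elim
  | @cons x x₁ y h p ih =>
    intro hp
    rw [Walk.cons_isPath_iff] at hp
    have hac' := ih hp.1
    simp only [Walk.edges_cons, List.toFinset_cons]
    refine pendant_acyclic h.ne ?_ hac' (adj_insert_iff h.ne)
    intro u hadj
    rw [fromEdgeSet_adj] at hadj
    exact hp.2 (Walk.fst_mem_support_of_mem_edges p (List.mem_toFinset.1 hadj.1))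


lemma cycle_edge_count [Fintype V] {G : SimpleGraph V} {v : V} (w : G.Walk v v)
    (hw : w.IsCycle) :
    Nat.card (fromEdgeSet (↑w.edges.toFinset : Set (Sym2 V))).ConnectedComponent
      + w.edges.toFinset.card = Fintype.card V + 1 := by
  cases w with
  | nil => exact absurd rfl hw.ne_nil
  | @cons v x _ h p =>
    rw [Walk.cons_isCycle_iff] at hw
    obtain ⟨hp, hne⟩ := hw
    have heS : s(v, x) ∉ p.edges.toFinset := fun hmem => hne (List.mem_toFinset.1 hmem)
    have hd : ∀ e ∈ p.edges.toFinset, ¬ e.IsDiag := fun e heS' =>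
      G.not_isDiag_of_mem_edgeSet (p.edges_subset_edgeSet (List.mem_toFinset.1 heS'))
    have hcount := acyclic_card p.edges.toFinset hd (path_acyclic p hp)
    have hle : fromEdgeSet (↑p.edges.toFinset : Set (Sym2 V)) ≤
        fromEdgeSet (↑(insert s(v, x) p.edges.toFinset) : Set (Sym2 V)) :=
      fromEdgeSet_mono (by exact_mod_cast Finset.subset_insert _ _)
    have hr : (fromEdgeSet (↑p.edges.toFinset : Set (Sym2 V))).Reachable v x := by
      have hsub : ∀ e ∈ p.edges,
          e ∈ (fromEdgeSet (↑p.edges.toFinset : Set (Sym2 V))).edgeSet := by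
        intro e hee
        rw [edgeSet_fromEdgeSet]
        exact ⟨List.mem_toFinset.2 hee, hd e (List.mem_toFinset.2 hee)⟩
      exact ((p.transfer _ hsub).reachable).symm
    have hsame := card_cc_same hle (adj_insert_iff h.ne) hr
    have hedges : (Walk.cons h p).edges.toFinset = insert s(v, x) p.edges.toFinset := by
      rw [Walk.edges_cons, List.toFinset_cons]
    rw [hedges, Finset.card_insert_of_notMem heS, ← hsame]
    omega

lemma cycle_covered {G : SimpleGraph V} {v : V} (w : G.Walk v v) (hw : w.IsCycle) :
    cG (fromEdgeSet (↑w.edges.toFinset : Set (Sym2 V))) = 1 := by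
  set H := fromEdgeSet (↑w.edges.toFinset : Set (Sym2 V)) with hHdef
  have hd : ∀ e ∈ w.edges, ¬ e.IsDiag := fun e hee =>
    G.not_isDiag_of_mem_edgeSet (w.edges_subset_edgeSet hee)
  have hsub : ∀ e ∈ w.edges, e ∈ H.edgeSet := by
    intro e hee
    rw [hHdef, edgeSet_fromEdgeSet]
    exact ⟨List.mem_toFinset.2 hee, hd e hee⟩
  have hkey : ∀ u u' : V, H.Adj u u' →
      H.connectedComponentMk u = H.connectedComponentMk v := by
    intro u u' hadj
    have hmem : s(u, u') ∈ w.edges := by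
      rw [hHdef, fromEdgeSet_adj] at hadj
      exact List.mem_toFinset.1 hadj.1
    have hu : u ∈ (w.transfer H hsub).support := by
      rw [Walk.support_transfer]
      exact Walk.fst_mem_support_of_mem_edges w hmem
    exact (ConnectedComponent.sound ((w.transfer H hsub).takeUntil u hu).reachable).symm
  rw [cG, Nat.card_eq_one_iff_unique]
  constructor
  · constructor
    rintro ⟨c, u, u', hadj, hmk⟩ ⟨c2, u2, u2', hadj2, hmk2⟩
    apply Subtype.ext
    simp only
    rw [← hmk, ← hmk2, hkey u u' hadj, hkey u2 u2' hadj2]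
  · cases w with
    | nil => exact absurd rfl hw.ne_nil
    | @cons v x _ h p =>
      have hadj : H.Adj v x := by
        rw [hHdef, fromEdgeSet_adj]
        exact ⟨by
          rw [Finset.mem_coe, List.mem_toFinset, Walk.edges_cons]
          exact List.mem_cons_self, h.ne⟩
      exact ⟨⟨H.connectedComponentMk v, v, x, hadj, rfl⟩⟩

lemma exists_cycle_subset {G : SimpleGraph V} {A : Finset (Sym2 V)}
    (hA : (↑A : Set (Sym2 V)) ⊆ G.edgeSet)
    (hnac : ¬ (fromEdgeSet (↑A : Set (Sym2 V))).IsAcyclic) :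
    ∃ B : Finset (Sym2 V), inducesCycle G B ∧ B ⊆ A := by
  rw [IsAcyclic] at hnac
  push_neg at hnac
  obtain ⟨v, c, hc⟩ := hnac
  have hle : fromEdgeSet (↑A : Set (Sym2 V)) ≤ G := by
    conv_rhs => rw [← fromEdgeSet_edgeSet G]
    exact fromEdgeSet_mono hA
  refine ⟨(c.mapLe hle).edges.toFinset, ⟨v, c.mapLe hle, (Walk.mapLe_isCycle hle).2 hc, rfl⟩, ?_⟩
  intro e hee
  rw [List.mem_toFinset] at hee
  have hee' : e ∈ c.edges := by
    simpa [Walk.edges_mapLe_eq_edges] using hee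
  have := c.edges_subset_edgeSet hee'
  rw [edgeSet_fromEdgeSet] at this
  exact Finset.mem_coe.1 this.1

lemma finsupp_eq_iff' (a b c i j k : ℕ) :
    Finsupp.single (0 : Fin 3) a + Finsupp.single 1 b + Finsupp.single 2 c =
      Finsupp.single 0 i + Finsupp.single 1 j + Finsupp.single 2 k ↔
      a = i ∧ b = j ∧ c = k := by
  constructor
  · intro h
    have h0 := DFunLike.congr_fun h 0
    have h1 := DFunLike.congr_fun h 1
    have h2 := DFunLike.congr_fun h 2
    simp only [Finsupp.add_apply, Finsupp.single_apply,
      show ((0 : Fin 3) = 0) = True by simp, show ((1 : Fin 3) = 0) = False by decide,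
      show ((2 : Fin 3) = 0) = False by decide, show ((0 : Fin 3) = 1) = False by decide,
      show ((1 : Fin 3) = 1) = True by simp, show ((2 : Fin 3) = 1) = False by decide,
      show ((0 : Fin 3) = 2) = False by decide, show ((1 : Fin 3) = 2) = False by decide,
      show ((2 : Fin 3) = 2) = True by simp, if_true, if_false, add_zero, zero_add] at h0 h1 h2
    exact ⟨h0, h1, h2⟩
  · rintro ⟨rfl, rfl, rfl⟩; rfl

lemma coeff3_ccp [Fintype V] (G : SimpleGraph V) (i j k : ℕ) :
    coeff3 (ccp G) i j k =
      (((edgeFinset' G).powerset).filter (fun A : Finset (Sym2 V) =>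
        kG (fromEdgeSet (↑A : Set (Sym2 V))) = i ∧ A.card = j ∧
          cG (fromEdgeSet (↑A : Set (Sym2 V))) = k)).card := by
  classical
  rw [coeff3, ccp, MvPolynomial.coeff_sum]
  have hterm : ∀ A ∈ (edgeFinset' G).powerset,
      MvPolynomial.coeff
          (Finsupp.single 0 i + Finsupp.single 1 j + Finsupp.single 2 k)
          (X (0 : Fin 3) ^ kG (fromEdgeSet (↑A : Set (Sym2 V))) * X 1 ^ A.card *
            X 2 ^ cG (fromEdgeSet (↑A : Set (Sym2 V)))) =
        if kG (fromEdgeSet (↑A : Set (Sym2 V))) = i ∧ A.card = j ∧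
            cG (fromEdgeSet (↑A : Set (Sym2 V))) = k then (1 : ℤ) else 0 := by
    intro A _
    rw [X_pow_eq_monomial, X_pow_eq_monomial, X_pow_eq_monomial, monomial_mul, monomial_mul,
      coeff_monomial, one_mul, one_mul]
    exact if_congr (finsupp_eq_iff' _ _ _ _ _ _) rfl rfl
  rw [Finset.sum_congr rfl hterm, Finset.sum_boole]

end CCPAux

/-- Let `G` be a finite graph on `n(G)` vertices containing at least
one cycle.  Then the girth `g(G)` is the minimum `j` such that the coefficient of
`x^{n(G)−j+1} y^j z^1` in `C(G)` is positive, and `#g(G)` equals the coefficient of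
`x^{n(G)−g(G)+1} y^{g(G)} z^1` in `C(G)`. -/
theorem ccp_girth {V : Type} [Fintype V] (G : SimpleGraph V)
    (h : ∃ A : Finset (Sym2 V), inducesCycle G A) :
    girth' G =
      sInf {j | ∃ i, i + j = Fintype.card V + 1 ∧ 0 < coeff3 (ccp G) i j 1} ∧
    (numGirthCycles G : ℤ) =
      coeff3 (ccp G) (Fintype.card V - girth' G + 1) (girth' G) 1 := by
  classical
  obtain ⟨A₁, hA₁⟩ := h
  have hSne : {j | ∃ A : Finset (Sym2 V), inducesCycle G A ∧ A.card = j}.Nonempty :=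
    ⟨A₁.card, A₁, hA₁, rfl⟩
  obtain ⟨A₀, hA₀cyc, hA₀card⟩ := Nat.sInf_mem hSne
  have hA₀card : A₀.card = girth' G := hA₀card
  have hglb : ∀ B : Finset (Sym2 V), inducesCycle G B → girth' G ≤ B.card :=
    fun B hB => Nat.sInf_le ⟨B, hB, rfl⟩
  obtain ⟨v, w, hw, hWA⟩ := hA₀cyc
  haveI : Nonempty V := ⟨v⟩
  have hsub : A₀ ⊆ edgeFinset' G := by
    intro e hee
    rw [edgeFinset', Set.Finite.mem_toFinset]
    exact w.edges_subset_edgeSet (by rwa [← hWA, List.mem_toFinset] at hee)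
  have hk : kG (SimpleGraph.fromEdgeSet (↑A₀ : Set (Sym2 V))) + girth' G
      = Fintype.card V + 1 := by
    rw [← hA₀card, ← hWA]
    exact CCPAux.cycle_edge_count w hw
  have hc1 : cG (SimpleGraph.fromEdgeSet (↑A₀ : Set (Sym2 V))) = 1 := by
    rw [← hWA]
    exact CCPAux.cycle_covered w hw
  haveI : Nonempty (SimpleGraph.fromEdgeSet (↑A₀ : Set (Sym2 V))).ConnectedComponent :=
    ⟨(SimpleGraph.fromEdgeSet (↑A₀ : Set (Sym2 V))).connectedComponentMk v⟩
  have hkpos : 0 < kG (SimpleGraph.fromEdgeSet (↑A₀ : Set (Sym2 V))) := Nat.card_pos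
  have hgn : girth' G ≤ Fintype.card V := by omega
  -- decoding a positive coefficient
  have hdecode : ∀ i j : ℕ, i + j = Fintype.card V + 1 →
      0 < coeff3 (ccp G) i j 1 → girth' G ≤ j := by
    intro i j hij hpos
    rw [CCPAux.coeff3_ccp] at hpos
    have hpos' : (((edgeFinset' G).powerset).filter (fun A : Finset (Sym2 V) =>
        kG (SimpleGraph.fromEdgeSet (↑A : Set (Sym2 V))) = i ∧ A.card = j ∧
          cG (SimpleGraph.fromEdgeSet (↑A : Set (Sym2 V))) = 1)).Nonempty := by
      rw [← Finset.card_pos]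
      exact_mod_cast hpos
    obtain ⟨A, hA⟩ := hpos'
    rw [Finset.mem_filter, Finset.mem_powerset] at hA
    obtain ⟨hAsub, hki, hcard, _⟩ := hA
    have hAsub' : (↑A : Set (Sym2 V)) ⊆ G.edgeSet := by
      intro e hee
      have := hAsub (Finset.mem_coe.1 hee)
      rwa [edgeFinset', Set.Finite.mem_toFinset] at this
    have hnac : ¬ (SimpleGraph.fromEdgeSet (↑A : Set (Sym2 V))).IsAcyclic := by
      intro hac
      have hd : ∀ e ∈ A, ¬ e.IsDiag := fun e hee =>
        G.not_isDiag_of_mem_edgeSet (hAsub' (Finset.mem_coe.2 hee))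
      have h2 : kG (SimpleGraph.fromEdgeSet (↑A : Set (Sym2 V))) + A.card
          = Fintype.card V := CCPAux.acyclic_card A hd hac
      omega
    obtain ⟨B, hBcyc, hBA⟩ := CCPAux.exists_cycle_subset hAsub' hnac
    calc girth' G ≤ B.card := hglb B hBcyc
      _ ≤ A.card := Finset.card_le_card hBA
      _ = j := hcard
  have hmem0 : A₀ ∈ ((edgeFinset' G).powerset).filter (fun A : Finset (Sym2 V) =>
      kG (SimpleGraph.fromEdgeSet (↑A : Set (Sym2 V)))
        = kG (SimpleGraph.fromEdgeSet (↑A₀ : Set (Sym2 V))) ∧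
      A.card = girth' G ∧ cG (SimpleGraph.fromEdgeSet (↑A : Set (Sym2 V))) = 1) := by
    rw [Finset.mem_filter, Finset.mem_powerset]
    exact ⟨hsub, rfl, hA₀card, hc1⟩
  have hgS : girth' G ∈
      {j | ∃ i, i + j = Fintype.card V + 1 ∧ 0 < coeff3 (ccp G) i j 1} := by
    refine ⟨kG (SimpleGraph.fromEdgeSet (↑A₀ : Set (Sym2 V))), hk, ?_⟩
    rw [CCPAux.coeff3_ccp]
    exact_mod_cast Finset.card_pos.2 ⟨A₀, hmem0⟩
  constructor
  · apply le_antisymm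
    · obtain ⟨i, hij, hpos⟩ := Nat.sInf_mem (⟨girth' G, hgS⟩ : Set.Nonempty _)
      exact hdecode i _ hij hpos
    · exact Nat.sInf_le hgS
  · rw [numGirthCycles, CCPAux.coeff3_ccp]
    have hfe : ((edgeFinset' G).powerset.filter
          (fun A => inducesCycle G A ∧ A.card = girth' G)) =
        ((edgeFinset' G).powerset).filter (fun A : Finset (Sym2 V) =>
          kG (SimpleGraph.fromEdgeSet (↑A : Set (Sym2 V)))
            = Fintype.card V - girth' G + 1 ∧
          A.card = girth' G ∧
          cG (SimpleGraph.fromEdgeSet (↑A : Set (Sym2 V))) = 1) := by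
      apply Finset.filter_congr
      intro A hAmem
      rw [Finset.mem_powerset] at hAmem
      have hAsub' : (↑A : Set (Sym2 V)) ⊆ G.edgeSet := by
        intro e hee
        have := hAmem (Finset.mem_coe.1 hee)
        rwa [edgeFinset', Set.Finite.mem_toFinset] at this
      constructor
      · rintro ⟨⟨v', w', hw', hWA'⟩, hcard⟩
        have hk' : kG (SimpleGraph.fromEdgeSet (↑A : Set (Sym2 V))) + A.card
            = Fintype.card V + 1 := by
          rw [← hWA']
          exact CCPAux.cycle_edge_count w' hw'
        have hc' : cG (SimpleGraph.fromEdgeSet (↑A : Set (Sym2 V))) = 1 := by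
          rw [← hWA']
          exact CCPAux.cycle_covered w' hw'
        exact ⟨by omega, hcard, hc'⟩
      · rintro ⟨hki, hcard, _⟩
        have hnac : ¬ (SimpleGraph.fromEdgeSet (↑A : Set (Sym2 V))).IsAcyclic := by
          intro hac
          have hd : ∀ e ∈ A, ¬ e.IsDiag := fun e hee =>
            G.not_isDiag_of_mem_edgeSet (hAsub' (Finset.mem_coe.2 hee))
          have h2 : kG (SimpleGraph.fromEdgeSet (↑A : Set (Sym2 V))) + A.card
              = Fintype.card V := CCPAux.acyclic_card A hd hac
          omega
        obtain ⟨B, hBcyc, hBA⟩ := CCPAux.exists_cycle_subset hAsub' hnac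
        have hBcard : A.card ≤ B.card := by
          have := hglb B hBcyc
          omega
        have hAB : B = A := Finset.eq_of_subset_of_card_le hBA hBcard
        exact ⟨hAB ▸ hBcyc, hcard⟩
    rw [hfe]

end
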